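/- Let $r \geq 1$ and let $s$ be the unique natural number with $2^{s-1} \leq r < 2^s$. Suppose $m+1$ is divisible by $2^s$. Then for all $1 \leq i \leq r$ and all $0 \leq j \leq m+1-i$ with $j$ divisible by $2^s$, the binomial coefficient $\binom{m+1-j}{i}$ is even. -/

import Mathlib

lemma aux_even_choose (s N i : ℕ) (hN : 2 ^ s ∣ N) (hi1 : 1 ≤ i) (hi2 : i < 2 ^ s) :
    Even (N.choose i) := by
  rcases Nat.eq_zero_or_pos N with h0 | hpos
  · subst h0
    simp [Nat.choose_eq_zero_of_lt hi1]
  obtain ⟨n, rfl⟩ := Nat.exists_eq_succ_of_ne_zero hpos.ne'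
  obtain ⟨k, rfl⟩ := Nat.exists_eq_succ_of_ne_zero (Nat.pos_iff_ne_zero.mp hi1)
  have key : (n + 1) * n.choose k = (n + 1).choose (k + 1) * (k + 1) :=
    Nat.add_one_mul_choose_eq n k
  have hdvd : 2 ^ s ∣ (n + 1).choose (k + 1) * (k + 1) := key ▸ hN.mul_right _
  set v := (k + 1).factorization 2 with hv
  obtain ⟨t, ht⟩ : 2 ^ v ∣ k + 1 := Nat.ordProj_dvd _ _
  have htodd : ¬ (2 ∣ t) := by
    rintro ⟨u, hu⟩
    have h1 : 2 ^ (v + 1) ∣ k + 1 := ⟨u, by rw [ht, hu]; ring⟩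
    have h2 := (Nat.Prime.pow_dvd_iff_le_factorization Nat.prime_two
      (Nat.succ_ne_zero k)).mp h1
    simp only [Nat.succ_eq_add_one] at h2
    omega
  have hvs : v < s := by
    by_contra h
    push_neg at h
    have h1 : 2 ^ s ∣ k + 1 := dvd_trans (pow_dvd_pow 2 h) (Nat.ordProj_dvd _ _)
    have := Nat.le_of_dvd (Nat.succ_pos k) h1
    omega
  nth_rewrite 2 [ht] at hdvd
  have h2 : 2 ^ (s - v) * 2 ^ v = 2 ^ s := by
    rw [← pow_add]; congr 1; omega
  have hdvd2 : 2 ^ (s - v) ∣ (n + 1).choose (k + 1) * t := by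
    have h2pos : 0 < 2 ^ v := pow_pos (by norm_num) v
    rw [← Nat.mul_dvd_mul_iff_right h2pos]
    calc 2 ^ (s - v) * 2 ^ v = 2 ^ s := h2
      _ ∣ (n + 1).choose (k + 1) * (2 ^ v * t) := hdvd
      _ = (n + 1).choose (k + 1) * t * 2 ^ v := by ring
  have hss : 1 ≤ s - v := by omega
  have h2d : 2 ∣ (n + 1).choose (k + 1) * t :=
    dvd_trans (dvd_pow_self 2 (by omega)) hdvd2
  rcases (Nat.Prime.dvd_mul Nat.prime_two).mp h2d with h | h
  · exact even_iff_two_dvd.mpr h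
  · exact absurd h htodd

/-- If `r ≥ 1`, `2^(s-1) ≤ r < 2^s` and `2^s ∣ m+1`, then for all
`1 ≤ i ≤ r` and all `j ≤ m+1-i` divisible by `2^s`, the binomial coefficient
`(m+1-j).choose i` is even. -/
theorem stmt_3 (r s m : ℕ) (hr : 1 ≤ r)
    (hs1 : 2 ^ (s - 1) ≤ r) (hs2 : r < 2 ^ s)
    (hm : 2 ^ s ∣ m + 1) :
    ∀ i, 1 ≤ i → i ≤ r → ∀ j, j ≤ m + 1 - i → 2 ^ s ∣ j →
      Even ((m + 1 - j).choose i) := by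
  intro i hi1 hi2 j hj hjd
  apply aux_even_choose s
  · exact (Nat.dvd_sub hm hjd)
  · exact hi1
  · omega
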